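/- Let θ > 0 and let 𝔥 be a dimension function with 𝔥(x) = (log(1/x))^{-θ} for all small x > 0. If E ⊆ ℝ² is an F_𝔥-set, then the Hausdorff dimension of E satisfies dim_H(E) ≥ 1/2. -/

import Mathlib

open MeasureTheory Set Filter
open scoped ENNReal NNReal

/-- Generalized Hausdorff measure on the plane associated with a dimension function. -/
noncomputable def genH (h : ℝ → ℝ) : Measure (EuclideanSpace ℝ (Fin 2)) :=
  Measure.mkMetric fun d => ENNReal.ofReal (h d.toReal)

/-- A dimension function: nondecreasing, continuous on `[0,∞)`, `h 0 = 0`, nonnegative. -/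
def IsDimFun (h : ℝ → ℝ) : Prop :=
  MonotoneOn h (Ici 0) ∧ ContinuousOn h (Ici 0) ∧ h 0 = 0 ∧ ∀ x ≥ (0:ℝ), 0 ≤ h x

/-- Doubling condition for a dimension function. -/
def IsDoubling (h : ℝ → ℝ) : Prop := ∃ C > (0:ℝ), ∀ x ≥ (0:ℝ), h (2 * x) ≤ C * h x

/-- `E` is an `F_𝔥`-set: for each unit direction there is a unit segment in that
direction meeting `E` in a set of positive `H^𝔥` measure. -/
def IsFurstenberg (𝔥 : ℝ → ℝ) (E : Set (EuclideanSpace ℝ (Fin 2))) : Prop :=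
  ∀ e : EuclideanSpace ℝ (Fin 2), ‖e‖ = 1 →
    ∃ x : EuclideanSpace ℝ (Fin 2), 0 < genH 𝔥 (segment ℝ x (x + e) ∩ E)

namespace Stmt5Aux

noncomputable section

abbrev X : Type := EuclideanSpace ℝ (Fin 2)

def dir (u : ℝ) : X := (EuclideanSpace.equiv (Fin 2) ℝ).symm ![(Real.sqrt (1+u^2))⁻¹, u * (Real.sqrt (1+u^2))⁻¹]

lemma sqrt_pos_aux (u : ℝ) : 0 < Real.sqrt (1 + u^2) := by
  apply Real.sqrt_pos.2; positivity

lemma dir_apply0 (u : ℝ) : dir u 0 = (Real.sqrt (1+u^2))⁻¹ := rfl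
lemma dir_apply1 (u : ℝ) : dir u 1 = u * (Real.sqrt (1+u^2))⁻¹ := rfl

lemma norm_dir (u : ℝ) : ‖dir u‖ = 1 := by
  have h0 : (0:ℝ) < 1 + u^2 := by positivity
  have hs := sqrt_pos_aux u
  rw [EuclideanSpace.norm_eq, Fin.sum_univ_two, dir_apply0, dir_apply1,
    Real.norm_eq_abs, Real.norm_eq_abs, sq_abs, sq_abs, mul_pow, inv_pow, Real.sq_sqrt h0.le]
  have : (1 + u^2)⁻¹ + u ^ 2 * (1 + u^2)⁻¹ = 1 := by field_simp
  rw [this, Real.sqrt_one]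

lemma abs_coord_le (z : X) (i : Fin 2) : |z i| ≤ ‖z‖ := by
  rw [EuclideanSpace.norm_eq, ← Real.sqrt_sq_eq_abs]
  apply Real.sqrt_le_sqrt
  have := Finset.single_le_sum (f := fun j => ‖z j‖ ^ 2) (fun j _ => by positivity)
    (Finset.mem_univ i)
  simpa [Real.norm_eq_abs, sq_abs] using this


variable (𝔥 : ℝ → ℝ)

/-- gauge for the content: `𝔥` of the diameter, `∞` for unbounded sets. -/
def gauge (s : Set X) : ℝ≥0∞ :=
  if EMetric.diam s = ⊤ then ⊤ else ENNReal.ofReal (𝔥 (EMetric.diam s).toReal)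

lemma gauge_empty (h0 : 𝔥 0 = 0) : gauge 𝔥 (∅ : Set X) = 0 := by
  simp [gauge, h0, EMetric.diam]

/-- the `𝔥`-content. -/
def cont (h0 : 𝔥 0 = 0) : OuterMeasure X := OuterMeasure.ofFunction (gauge 𝔥) (gauge_empty 𝔥 h0)

lemma cont_le_gauge (h0 : 𝔥 0 = 0) (s : Set X) : cont 𝔥 h0 s ≤ gauge 𝔥 s :=
  OuterMeasure.ofFunction_le s

lemma cont_apply (h0 : 𝔥 0 = 0) (s : Set X) :
    cont 𝔥 h0 s = ⨅ (t : ℕ → Set X) (_ : s ⊆ iUnion t), ∑' n, gauge 𝔥 (t n) := rfl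

lemma gauge_of_bounded (h0 : 𝔥 0 = 0) (hnn : ∀ x ≥ (0:ℝ), 0 ≤ 𝔥 x)
    (hmono : MonotoneOn 𝔥 (Ici 0)) {s : Set X} (hs : EMetric.diam s ≠ ⊤)
    {D : ℝ} (hD : (EMetric.diam s).toReal ≤ D) :
    gauge 𝔥 s ≤ ENNReal.ofReal (𝔥 D) := by
  rw [gauge, if_neg hs]
  apply ENNReal.ofReal_le_ofReal
  exact hmono (ENNReal.toReal_nonneg) (le_trans ENNReal.toReal_nonneg hD) hD

/-- positivity of the generalized Hausdorff measure implies positivity of the content. -/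
lemma cont_pos_of_genH_pos (h0 : 𝔥 0 = 0)
    (hmono : MonotoneOn 𝔥 (Ici 0)) (hpos : ∀ x : ℝ, 0 < x → 0 < 𝔥 x)
    {A : Set X} (hA : 0 < genH 𝔥 A) : 0 < cont 𝔥 h0 A := by
  by_contra hc
  push_neg at hc
  have hc0 : cont 𝔥 h0 A = 0 := le_antisymm hc (zero_le)
  have happly : genH 𝔥 A =
      ⨆ (r : ℝ≥0∞) (_ : 0 < r),
        ⨅ (t : ℕ → Set X) (_ : A ⊆ iUnion t) (_ : ∀ n, EMetric.diam (t n) ≤ r),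
          ∑' n, ⨆ _ : (t n).Nonempty, ENNReal.ofReal (𝔥 (EMetric.diam (t n)).toReal) :=
    Measure.mkMetric_apply (fun d => ENNReal.ofReal (𝔥 d.toReal)) A
  have key : ∀ ε : ℝ≥0∞, 0 < ε → genH 𝔥 A ≤ ε := by
    intro ε hε
    rw [happly]
    refine iSup_le fun r => iSup_le fun hr => ?_
    obtain ⟨r₀, hr₀pos, hr₀⟩ : ∃ r₀ : ℝ, 0 < r₀ ∧ ENNReal.ofReal r₀ ≤ r := by
      rcases eq_or_ne r ⊤ with h | h
      · exact ⟨1, one_pos, by simp [h]⟩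
      · refine ⟨r.toReal / 2, ?_, ?_⟩
        · have : 0 < r.toReal := ENNReal.toReal_pos hr.ne' h
          linarith
        · rw [ENNReal.ofReal_div_of_pos (by norm_num), ENNReal.ofReal_toReal h]
          have h2 : ENNReal.ofReal (2:ℝ) = (2:ℝ≥0∞) := by norm_num
          rw [h2]
          calc r / 2 ≤ r / 1 := by gcongr <;> norm_num
          _ = r := by simp
    set ε' : ℝ≥0∞ := min ε (ENNReal.ofReal (𝔥 r₀)) with hε'
    have hε'pos : 0 < ε' := lt_min hε (ENNReal.ofReal_pos.2 (hpos r₀ hr₀pos))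
    have hlt : cont 𝔥 h0 A < ε' := by rw [hc0]; exact hε'pos
    rw [cont_apply, iInf_lt_iff] at hlt
    obtain ⟨t, hlt⟩ := hlt
    rw [iInf_lt_iff] at hlt
    obtain ⟨htA, htsum⟩ := hlt
    have hdiam : ∀ n, EMetric.diam (t n) ≤ r := by
      intro n
      have hn : gauge 𝔥 (t n) < ε' := lt_of_le_of_lt (ENNReal.le_tsum n) htsum
      have hfin : EMetric.diam (t n) ≠ ⊤ := by
        intro hcontra
        rw [gauge, if_pos hcontra] at hn
        exact absurd hn (by simp)
      rw [gauge, if_neg hfin] at hn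
      have hlt2 : ENNReal.ofReal (𝔥 (EMetric.diam (t n)).toReal) < ENNReal.ofReal (𝔥 r₀) :=
        lt_of_lt_of_le hn (min_le_right _ _)
      have hdn : (EMetric.diam (t n)).toReal < r₀ := by
        by_contra hge
        push_neg at hge
        have h1 : 𝔥 r₀ ≤ 𝔥 (EMetric.diam (t n)).toReal :=
          hmono (le_of_lt hr₀pos) (le_trans hr₀pos.le hge) hge
        exact absurd (lt_of_le_of_lt (ENNReal.ofReal_le_ofReal h1) hlt2) (lt_irrefl _)
      calc EMetric.diam (t n) = ENNReal.ofReal (EMetric.diam (t n)).toReal :=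
            (ENNReal.ofReal_toReal hfin).symm
        _ ≤ ENNReal.ofReal r₀ := ENNReal.ofReal_le_ofReal hdn.le
        _ ≤ r := hr₀
    calc ⨅ (t : ℕ → Set X) (_ : A ⊆ iUnion t) (_ : ∀ n, EMetric.diam (t n) ≤ r),
          ∑' n, ⨆ _ : (t n).Nonempty, ENNReal.ofReal (𝔥 (EMetric.diam (t n)).toReal)
        ≤ ∑' n, ⨆ _ : (t n).Nonempty, ENNReal.ofReal (𝔥 (EMetric.diam (t n)).toReal) :=
          iInf_le_of_le t (iInf_le_of_le htA (iInf_le_of_le hdiam le_rfl))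
      _ ≤ ∑' n, gauge 𝔥 (t n) := by
          refine ENNReal.tsum_le_tsum fun n => ?_
          refine iSup_le fun _ => ?_
          rcases eq_or_ne (EMetric.diam (t n)) ⊤ with h | h
          · rw [gauge, if_pos h]; exact le_top
          · rw [gauge, if_neg h]
      _ ≤ ε' := htsum.le
      _ ≤ ε := min_le_left _ _
  have : genH 𝔥 A = 0 := by
    refine le_antisymm ?_ (zero_le)
    refine ENNReal.le_of_forall_pos_le_add fun ε hε _ => ?_
    simpa using key ε (by exact_mod_cast hε)
  exact hA.ne' this

/-- the set of slopes `u` in `[-1,1]` spanned by a vector from `P` to `Q`. -/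
def capture (P Q : Set X) : Set ℝ :=
  {u : ℝ | u ∈ Icc (-1:ℝ) 1 ∧ ∃ x ∈ P, ∃ y ∈ Q, ∃ τ : ℝ, 0 < τ ∧ y - x = τ • dir u}

/-- basic slope extraction. -/
lemma slope_eq {u : ℝ} (hu : u ∈ Icc (-1:ℝ) 1) {x y : X} {τ : ℝ} (hτ : 0 < τ)
    (h : y - x = τ • dir u) :
    (y - x) 0 ≥ ‖y - x‖ / 2 ∧ (y - x) 1 = u * ((y - x) 0) ∧ ‖y - x‖ = τ := by
  have hs := sqrt_pos_aux u
  have hsle : Real.sqrt (1 + u^2) ≤ 2 := by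
    have h1 : (1:ℝ) + u^2 ≤ 4 := by nlinarith [hu.1, hu.2]
    calc Real.sqrt (1+u^2) ≤ Real.sqrt 4 := Real.sqrt_le_sqrt h1
      _ = 2 := by rw [show (4:ℝ) = 2^2 by norm_num, Real.sqrt_sq (by norm_num)]
  have hnorm : ‖y - x‖ = τ := by
    rw [h, norm_smul, norm_dir, Real.norm_eq_abs, abs_of_pos hτ, mul_one]
  have h0 : (y - x) 0 = τ * (Real.sqrt (1+u^2))⁻¹ := by
    rw [h]; rfl
  have h1 : (y - x) 1 = τ * (u * (Real.sqrt (1+u^2))⁻¹) := by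
    rw [h]; rfl
  refine ⟨?_, ?_, hnorm⟩
  · rw [h0, hnorm, ge_iff_le, div_le_iff₀ (by norm_num : (0:ℝ) < 2), mul_comm τ _, mul_assoc]
    have hinv : Real.sqrt (1+u^2) * (Real.sqrt (1+u^2))⁻¹ = 1 := mul_inv_cancel₀ hs.ne'
    have hinv_nn : (0:ℝ) ≤ (Real.sqrt (1+u^2))⁻¹ := by positivity
    have h2 : (1:ℝ) ≤ (Real.sqrt (1+u^2))⁻¹ * 2 := by nlinarith
    nlinarith [hτ.le]
  · rw [h0, h1]; ring

/-- Any two captured slopes of a pair of small, far-apart sets are close. -/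
lemma capture_dist_le {P Q : Set X} {δ D : ℝ} (hδ : 0 ≤ δ) (hD : 0 < D)
    (hP : ∀ x ∈ P, ∀ x' ∈ P, dist x x' ≤ δ) (hQ : ∀ y ∈ Q, ∀ y' ∈ Q, dist y y' ≤ δ)
    {x₀ y₀ : X} (hx₀ : x₀ ∈ P) (hy₀ : y₀ ∈ Q) (hfar : D / 2 ≤ dist x₀ y₀)
    (hsmall : 16 * δ ≤ D)
    {u u' : ℝ} (hu : u ∈ capture P Q) (hu' : u' ∈ capture P Q) :
    |u - u'| ≤ 64 * δ / D := by
  obtain ⟨huI, x, hx, y, hy, τ, hτ, hzu⟩ := hu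
  obtain ⟨huI', x', hx', y', hy', τ', hτ', hzu'⟩ := hu'
  obtain ⟨ha, hb, hn⟩ := slope_eq huI hτ hzu
  obtain ⟨ha', hb', hn'⟩ := slope_eq huI' hτ' hzu'
  have hzn : D / 4 ≤ ‖y - x‖ := by
    have h1 : dist x₀ y₀ ≤ dist x₀ x + dist x y + dist y y₀ := dist_triangle4 _ _ _ _
    have h2 : dist x₀ x ≤ δ := hP _ hx₀ _ hx
    have h3 : dist y y₀ ≤ δ := hQ _ hy _ hy₀
    have h4 : ‖y - x‖ = dist x y := by rw [dist_eq_norm, norm_sub_rev]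
    rw [h4]; linarith
  have hzn' : D / 4 ≤ ‖y' - x'‖ := by
    have h1 : dist x₀ y₀ ≤ dist x₀ x' + dist x' y' + dist y' y₀ := dist_triangle4 _ _ _ _
    have h2 : dist x₀ x' ≤ δ := hP _ hx₀ _ hx'
    have h3 : dist y' y₀ ≤ δ := hQ _ hy' _ hy₀
    have h4 : ‖y' - x'‖ = dist x' y' := by rw [dist_eq_norm, norm_sub_rev]
    rw [h4]; linarith
  have hzz' : ‖(y - x) - (y' - x')‖ ≤ 2 * δ := by
    have heq : (y - x) - (y' - x') = (y - y') - (x - x') := by abel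
    have h5 : ‖y - y'‖ ≤ δ := by rw [← dist_eq_norm]; exact hQ _ hy _ hy'
    have h6 : ‖x - x'‖ ≤ δ := by rw [← dist_eq_norm]; exact hP _ hx _ hx'
    calc ‖(y - x) - (y' - x')‖ = ‖(y - y') - (x - x')‖ := by rw [heq]
      _ ≤ ‖y - y'‖ + ‖x - x'‖ := norm_sub_le _ _
      _ ≤ 2 * δ := by linarith
  have hznpos : 0 < ‖y - x‖ := lt_of_lt_of_le (by linarith) hzn
  have ha0 : 0 < (y - x) 0 := lt_of_lt_of_le (by linarith) ha
  have ha0' : 0 < (y' - x') 0 := by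
    have : 0 < ‖y' - x'‖ := lt_of_lt_of_le (by linarith) hzn'
    exact lt_of_lt_of_le (by linarith) ha'
  have haD : D / 8 ≤ (y - x) 0 := le_trans (by linarith) ha
  have haD' : D / 8 ≤ (y' - x') 0 := le_trans (by linarith) ha'
  have habs_a : |(y - x) 0| ≤ ‖y - x‖ := abs_coord_le _ 0
  have habs_b : |(y - x) 1| ≤ ‖y - x‖ := abs_coord_le _ 1
  have hda : |(y - x) 0 - (y' - x') 0| ≤ 2 * δ := by
    have heq : (y - x) 0 - (y' - x') 0 = ((y - x) - (y' - x')) 0 := rfl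
    rw [heq]
    exact le_trans (abs_coord_le _ 0) hzz'
  have hdb : |(y - x) 1 - (y' - x') 1| ≤ 2 * δ := by
    have heq : (y - x) 1 - (y' - x') 1 = ((y - x) - (y' - x')) 1 := rfl
    rw [heq]
    exact le_trans (abs_coord_le _ 1) hzz'
  have hueq : u = (y - x) 1 / (y - x) 0 := by
    rw [eq_div_iff ha0.ne', hb]
  have hueq' : u' = (y' - x') 1 / (y' - x') 0 := by
    rw [eq_div_iff ha0'.ne', hb']
  rw [hueq, hueq', div_sub_div _ _ ha0.ne' ha0'.ne', abs_div]
  have hnum : |(y - x) 1 * (y' - x') 0 - (y - x) 0 * (y' - x') 1| ≤ 4 * δ * ‖y - x‖ := by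
    have heq : (y - x) 1 * (y' - x') 0 - (y - x) 0 * (y' - x') 1
        = (y - x) 1 * ((y' - x') 0 - (y - x) 0) + (y - x) 0 * ((y - x) 1 - (y' - x') 1) := by
      ring
    rw [heq]
    calc |(y - x) 1 * ((y' - x') 0 - (y - x) 0) + (y - x) 0 * ((y - x) 1 - (y' - x') 1)|
        ≤ |(y - x) 1 * ((y' - x') 0 - (y - x) 0)| + |(y - x) 0 * ((y - x) 1 - (y' - x') 1)| :=
          abs_add_le _ _
      _ = |(y - x) 1| * |(y' - x') 0 - (y - x) 0| + |(y - x) 0| * |(y - x) 1 - (y' - x') 1| := by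
          rw [abs_mul, abs_mul]
      _ ≤ ‖y - x‖ * (2 * δ) + ‖y - x‖ * (2 * δ) := by
          have h7 : |(y' - x') 0 - (y - x) 0| ≤ 2 * δ := by rw [abs_sub_comm]; exact hda
          gcongr
      _ = 4 * δ * ‖y - x‖ := by ring
  have hden : |(y - x) 0 * (y' - x') 0| = (y - x) 0 * (y' - x') 0 :=
    abs_of_pos (mul_pos ha0 ha0')
  rw [hden]
  have hden_ge : (‖y - x‖ / 2) * (D / 8) ≤ (y - x) 0 * (y' - x') 0 := by nlinarith
  calc |(y - x) 1 * (y' - x') 0 - (y - x) 0 * (y' - x') 1| / ((y - x) 0 * (y' - x') 0)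
      ≤ (4 * δ * ‖y - x‖) / ((‖y - x‖ / 2) * (D / 8)) :=
        div_le_div₀ (by positivity) hnum (by positivity) hden_ge
    _ = 64 * δ / D := by field_simp; ring

/-- The measure of the capture set of a small, far-apart pair. -/
lemma volume_capture_le {P Q : Set X} {δ D : ℝ} (hδ : 0 ≤ δ) (hD : 0 < D)
    (hP : ∀ x ∈ P, ∀ x' ∈ P, dist x x' ≤ δ) (hQ : ∀ y ∈ Q, ∀ y' ∈ Q, dist y y' ≤ δ)
    {x₀ y₀ : X} (hx₀ : x₀ ∈ P) (hy₀ : y₀ ∈ Q) (hfar : D / 2 ≤ dist x₀ y₀)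
    (hsmall : 16 * δ ≤ D) :
    volume (capture P Q) ≤ ENNReal.ofReal (128 * δ / D) := by
  rcases Set.eq_empty_or_nonempty (capture P Q) with h | ⟨u₀, hu₀⟩
  · rw [h]; simp
  · have hsub : capture P Q ⊆ Metric.closedBall u₀ (64 * δ / D) := by
      intro u hu
      rw [Metric.mem_closedBall, Real.dist_eq]
      exact capture_dist_le hδ hD hP hQ hx₀ hy₀ hfar hsmall hu hu₀
    calc volume (capture P Q) ≤ volume (Metric.closedBall u₀ (64 * δ / D)) :=
          measure_mono hsub
      _ = ENNReal.ofReal (2 * (64 * δ / D)) := Real.volume_closedBall _ _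
      _ = ENNReal.ofReal (128 * δ / D) := by rw [show 2*(64*δ/D) = 128*δ/D by ring]



/-- pigeonhole over an increasing family of direction sets. -/
lemma exists_one_le_volume {T : ℕ → Set ℝ} (hmono : Monotone T)
    (hcover : Icc (-1:ℝ) 1 ⊆ ⋃ M, T M) : ∃ M, 1 ≤ volume (T M) := by
  by_contra hc
  push_neg at hc
  have h1 : volume (⋃ M, T M) = ⨆ M, volume (T M) := hmono.measure_iUnion
  have h2 : (2:ℝ≥0∞) ≤ volume (⋃ M, T M) := by
    calc (2:ℝ≥0∞) = volume (Icc (-1:ℝ) 1) := by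
          rw [Real.volume_Icc]; norm_num
      _ ≤ volume (⋃ M, T M) := measure_mono hcover
  rw [h1] at h2
  have h3 : ⨆ M, volume (T M) ≤ 1 := iSup_le fun M => (hc M).le
  have := le_trans h2 h3
  norm_num at this

/-- extract a cover with small `s`-sum and small diameters from `μH[s] E = 0`. -/
lemma exists_cover_of_hausdorff_zero {E : Set X} {s : ℝ} (hs : 0 < s)
    (hμ : μH[s] E = 0) {δ₀ : ℝ} (hδ₀ : 0 < δ₀) :
    ∃ t : ℕ → Set X, E ⊆ ⋃ n, t n ∧ (∀ n, EMetric.diam (t n) ≤ ENNReal.ofReal δ₀) ∧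
      ∑' n, (EMetric.diam (t n)) ^ s ≤ 1 := by
  have happly := MeasureTheory.Measure.hausdorffMeasure_apply s E
  have hterm : (⨅ (t : ℕ → Set X) (_ : E ⊆ ⋃ n, t n)
      (_ : ∀ n, EMetric.diam (t n) ≤ ENNReal.ofReal δ₀),
      ∑' n, ⨆ _ : (t n).Nonempty, EMetric.diam (t n) ^ s) ≤ μH[s] E := by
    rw [happly]
    exact le_iSup₂_of_le (ENNReal.ofReal δ₀) (ENNReal.ofReal_pos.2 hδ₀) le_rfl
  rw [hμ] at hterm
  have hlt : (⨅ (t : ℕ → Set X) (_ : E ⊆ ⋃ n, t n)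
      (_ : ∀ n, EMetric.diam (t n) ≤ ENNReal.ofReal δ₀),
      ∑' n, ⨆ _ : (t n).Nonempty, EMetric.diam (t n) ^ s) < 1 :=
    lt_of_le_of_lt hterm (by norm_num)
  rw [iInf_lt_iff] at hlt
  obtain ⟨t, hlt⟩ := hlt
  rw [iInf_lt_iff] at hlt
  obtain ⟨hcov, hlt⟩ := hlt
  rw [iInf_lt_iff] at hlt
  obtain ⟨hdiam, hlt⟩ := hlt
  refine ⟨t, hcov, hdiam, ?_⟩
  refine le_trans (ENNReal.tsum_le_tsum fun n => ?_) hlt.le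
  rcases Set.eq_empty_or_nonempty (t n) with h | h
  · rw [h]
    simp [ENNReal.zero_rpow_of_pos hs, EMetric.diam]
  · rw [iSup_pos h]



lemma seg_param {p e x : X} (hx : x ∈ segment ℝ p (p + e)) :
    ∃ t ∈ Icc (0:ℝ) 1, x = p + t • e := by
  rw [segment_eq_image'] at hx
  obtain ⟨t, ht, hx⟩ := hx
  exact ⟨t, ht, by rw [← hx, add_sub_cancel_left]⟩

lemma seg_sub {p e x y : X} (hx : x ∈ segment ℝ p (p + e)) (hy : y ∈ segment ℝ p (p + e)) :
    ∃ τ : ℝ, y - x = τ • e := by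
  obtain ⟨t, _, rfl⟩ := seg_param hx
  obtain ⟨t', _, rfl⟩ := seg_param hy
  exact ⟨t' - t, by rw [sub_smul]; abel⟩

lemma seg_bounded {p e : X} : EMetric.diam (segment ℝ p (p + e)) ≠ ⊤ := by
  have h : segment ℝ p (p + e) ⊆ Metric.closedBall p ‖e‖ := by
    intro x hx
    obtain ⟨t, ht, rfl⟩ := seg_param hx
    rw [Metric.mem_closedBall, dist_eq_norm]
    have heq : p + t • e - p = t • e := by abel
    rw [heq, norm_smul, Real.norm_eq_abs, abs_of_nonneg ht.1]
    calc t * ‖e‖ ≤ 1 * ‖e‖ := by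
          apply mul_le_mul_of_nonneg_right ht.2 (norm_nonneg _)
      _ = ‖e‖ := one_mul _
  have hb : Bornology.IsBounded (segment ℝ p (p + e)) :=
    (Metric.isBounded_closedBall).subset h
  exact hb.ediam_ne_top

lemma tsum_ofReal_geom_le (c r : ℝ) (hc : 0 ≤ c) (hr0 : 0 ≤ r) (hr : r < 1) :
    ∑' i : ℕ, ENNReal.ofReal (c * r ^ i) ≤ ENNReal.ofReal (c * (1 - r)⁻¹) := by
  have h1 : ∀ i : ℕ, ENNReal.ofReal (c * r ^ i) =
      ENNReal.ofReal c * (ENNReal.ofReal r) ^ i := by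
    intro i
    rw [ENNReal.ofReal_mul hc, ENNReal.ofReal_pow hr0]
  rw [tsum_congr h1, ENNReal.tsum_mul_left, ENNReal.tsum_geometric]
  rw [ENNReal.ofReal_mul hc]
  apply mul_le_mul_right
  have h2 : (1:ℝ≥0∞) - ENNReal.ofReal r = ENNReal.ofReal (1 - r) := by
    rw [ENNReal.ofReal_sub _ hr0, ENNReal.ofReal_one]
  rw [h2, ← ENNReal.ofReal_inv_of_pos (by linarith)]

/-- monotone decay comparison : `r ^ (A * K ^ i) ≤ r ^ A * (r ^ 1) ^ i`-type bound,
stated for `(2:ℝ) ^ (-γ * (A * K ^ i)) ≤ (2 ^ (-γ * A)) * (2 ^ (-γ)) ^ i`. -/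
lemma rpow_block_le {γ A K : ℝ} (hγ : 0 < γ) (hA : 1 ≤ A) (hK : 1 < K)
    (hAK : 1 ≤ A * (K - 1)) (i : ℕ) :
    (2:ℝ) ^ (-γ * (A * K ^ i)) ≤ (2:ℝ) ^ (-γ * A) * ((2:ℝ) ^ (-γ)) ^ i := by
  have hKi : A * K ^ i ≥ A + i := by
    have hb : (1:ℝ) + i * (K - 1) ≤ K ^ i := by
      have h := one_add_mul_le_pow (a := K - 1) (by linarith : (-2:ℝ) ≤ K - 1) i
      calc (1:ℝ) + i * (K-1) = 1 + i * (K-1) := rfl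
        _ ≤ (1 + (K-1)) ^ i := h
        _ = K ^ i := by ring_nf
    have h2 : A * (1 + i * (K-1)) ≤ A * K ^ i :=
      mul_le_mul_of_nonneg_left hb (by linarith)
    have h3 : A + i ≤ A * (1 + i * (K-1)) := by
      have h4 : (i:ℝ) * 1 ≤ i * (A * (K-1)) := by
        apply mul_le_mul_of_nonneg_left _ (Nat.cast_nonneg i)
        linarith [hAK]
      nlinarith
    linarith
  have hstep : (2:ℝ) ^ (-γ * (A * K ^ i)) ≤ (2:ℝ) ^ (-γ * (A + i)) := by
    apply Real.rpow_le_rpow_of_exponent_le (by norm_num)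
    have := mul_le_mul_of_nonneg_left hKi hγ.le
    nlinarith
  calc (2:ℝ) ^ (-γ * (A * K ^ i)) ≤ (2:ℝ) ^ (-γ * (A + i)) := hstep
    _ = (2:ℝ) ^ (-γ * A) * ((2:ℝ) ^ (-γ)) ^ i := by
        rw [← Real.rpow_natCast ((2:ℝ) ^ (-γ)) i, ← Real.rpow_mul (by norm_num)]
        rw [← Real.rpow_add (by norm_num)]
        ring_nf



lemma h_pos_on_pos (𝔥 : ℝ → ℝ) (hmono : MonotoneOn 𝔥 (Ici 0)) {θ ε : ℝ}
    (hε : 0 < ε) (hfm : ∀ x : ℝ, 0 < x → x < ε → 𝔥 x = Real.log (1/x) ^ (-θ)) :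
    ∀ x : ℝ, 0 < x → 0 < 𝔥 x := by
  intro x hx
  set m : ℝ := min ε 1 with hm
  have hmpos : 0 < m := lt_min hε one_pos
  set y : ℝ := min x m / 2 with hy
  have hypos : 0 < y := by positivity
  have hyx : y ≤ x := by
    have h1 : min x m ≤ x := min_le_left _ _
    rw [hy]; linarith
  have hyε : y < ε := by
    have h1 : min x m ≤ m := min_le_right _ _
    have h2 : m ≤ ε := min_le_left _ _
    rw [hy]; linarith
  have hy1 : y < 1 := by
    have h1 : min x m ≤ m := min_le_right _ _
    have h2 : m ≤ 1 := min_le_right _ _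
    rw [hy]; linarith
  have hval : 𝔥 y = Real.log (1/y) ^ (-θ) := hfm y hypos hyε
  have hlogpos : 0 < Real.log (1/y) := Real.log_pos (by rw [lt_div_iff₀ hypos]; linarith)
  have hypos' : 0 < 𝔥 y := by
    rw [hval]; exact Real.rpow_pos_of_pos hlogpos _
  exact lt_of_lt_of_le hypos' (hmono (le_of_lt hypos) (le_trans hypos.le hyx) hyx)

lemma exp_calc {s γ K a : ℝ} (hγ : γ = (1/2 - s)/2) (hK : 2*s*K = s + 1/2) :
    (((2:ℝ) ^ (-(a*K))) ^ (-s))^2 * (128 * (2:ℝ) ^ (-a) / (2:ℝ) ^ (-(γ*a)))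
      = 128 * (2:ℝ) ^ (-(γ*a)) := by
  have h2 : (0:ℝ) < 2 := by norm_num
  have e1 : (((2:ℝ) ^ (-(a*K))) ^ (-s))^2 = (2:ℝ) ^ (2*s*(a*K)) := by
    rw [← Real.rpow_natCast (((2:ℝ) ^ (-(a*K))) ^ (-s)) 2, ← Real.rpow_mul h2.le,
      ← Real.rpow_mul h2.le]
    norm_num
    ring_nf
  have e2 : (2:ℝ) ^ (-a) / (2:ℝ) ^ (-(γ*a)) = (2:ℝ) ^ (-a + γ*a) := by
    rw [← Real.rpow_sub h2]
    ring_nf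
  rw [e1, mul_div_assoc, e2, mul_comm (128:ℝ) _, ← mul_assoc, ← Real.rpow_add h2]
  have e3 : 2*s*(a*K) + (-a + γ*a) = -(γ*a) := by
    have h4 : 2*s*(a*K) = (2*s*K)*a := by ring
    rw [h4, hK, hγ]; ring
  rw [e3]; ring

/-- the exponent `A * K ^ i` dominates `A + i`. -/
lemma a_lower {A K : ℝ} (hA : 1 ≤ A) (hK : 1 < K) (hAK : 1 ≤ A * (K - 1)) (i : ℕ) :
    A + i ≤ A * K ^ i := by
  have hb : (1:ℝ) + i * (K - 1) ≤ K ^ i := by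
    have h := one_add_mul_le_pow (a := K - 1) (by linarith : (-2:ℝ) ≤ K - 1) i
    calc (1:ℝ) + i * (K-1) = 1 + i * (K-1) := rfl
      _ ≤ (1 + (K-1)) ^ i := h
      _ = K ^ i := by ring_nf
  have h2 : A * (1 + i * (K-1)) ≤ A * K ^ i :=
    mul_le_mul_of_nonneg_left hb (by linarith)
  have h3 : A + i ≤ A * (1 + i * (K-1)) := by
    have h4 : (i:ℝ) * 1 ≤ i * (A * (K-1)) := by
      apply mul_le_mul_of_nonneg_left _ (Nat.cast_nonneg i)
      linarith [hAK]
    nlinarith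
  linarith


end
end Stmt5Aux

open Stmt5Aux

set_option maxHeartbeats 1600000 in
theorem stmt5 (θ : ℝ) (hθ : 0 < θ) (𝔥 : ℝ → ℝ) (h𝔥 : IsDimFun 𝔥)
    (hform : ∃ ε > (0:ℝ), ∀ x : ℝ, 0 < x → x < ε → 𝔥 x = Real.log (1 / x) ^ (-θ))
    (E : Set (EuclideanSpace ℝ (Fin 2))) (hE : IsFurstenberg 𝔥 E) :
    (1 / 2 : ENNReal) ≤ dimH E := by
  classical
  obtain ⟨hmono, hcontin, h𝔥0, h𝔥nn⟩ := h𝔥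
  obtain ⟨ε, hεpos, hfm⟩ := hform
  by_contra hcon
  push_neg at hcon
  have hpos : ∀ x : ℝ, 0 < x → 0 < 𝔥 x := h_pos_on_pos 𝔥 hmono hεpos hfm
  -- choose the exponent s
  obtain ⟨s₀, hs₀1, hs₀2⟩ := ENNReal.lt_iff_exists_nnreal_btwn.1 hcon
  set s : ℝ := (s₀ : ℝ) with hs_def
  have hs_pos : 0 < s := by
    have h1 : (0:ℝ≥0∞) < (s₀ : ℝ≥0∞) := lt_of_le_of_lt (zero_le) hs₀1
    have h2 : (0:ℝ≥0) < s₀ := by exact_mod_cast h1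
    exact_mod_cast h2
  have hs_half : s < 1/2 := by
    have h2 : ((s₀:ℝ≥0) : ℝ≥0∞) < (((1/2 : ℝ≥0)) : ℝ≥0∞) := by
      convert hs₀2
      simp
    have h3 : (s₀ : ℝ≥0) < 1/2 := ENNReal.coe_lt_coe.1 h2
    exact_mod_cast h3
  have hμ0 : μH[s] E = 0 := hausdorffMeasure_of_dimH_lt hs₀1
  -- slices
  set p : ℝ → X := fun u => Classical.choose (hE (dir u) (norm_dir u)) with hp_def
  set SS : ℝ → Set X := fun u => segment ℝ (p u) (p u + dir u) ∩ E with hSS_def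
  set C : OuterMeasure X := cont 𝔥 h𝔥0 with hC_def
  have hSpos : ∀ u : ℝ, 0 < C (SS u) := by
    intro u
    exact cont_pos_of_genH_pos 𝔥 h𝔥0 hmono hpos
      (Classical.choose_spec (hE (dir u) (norm_dir u)))
  -- pigeonhole over direction classes
  set T : ℕ → Set ℝ := fun M => {u | u ∈ Icc (-1:ℝ) 1 ∧ ((M : ℝ≥0∞))⁻¹ ≤ C (SS u)} with hT_def
  have hTmono : Monotone T := by
    intro M N hMN u hu
    refine ⟨hu.1, le_trans ?_ hu.2⟩
    exact ENNReal.inv_le_inv.2 (by exact_mod_cast Nat.cast_le.2 hMN)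
  have hTcover : Icc (-1:ℝ) 1 ⊆ ⋃ M, T M := by
    intro u hu
    obtain ⟨M, hM⟩ := ENNReal.exists_inv_nat_lt (hSpos u).ne'
    exact mem_iUnion.2 ⟨M, hu, hM.le⟩
  obtain ⟨M₀, hM₀⟩ := exists_one_le_volume hTmono hTcover
  set M : ℕ := M₀ + 1 with hM_def
  have hMpos : (0:ℝ) < M := by positivity
  have hMvol : 1 ≤ volume (T M) := le_trans hM₀ (measure_mono (hTmono (by omega)))
  -- constants
  set K : ℝ := (1 + 1/(2*s))/2 with hK_def
  have hK1 : 1 < K := by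
    have h1 : 1 < 1/(2*s) := by
      rw [lt_div_iff₀ (by linarith)]; linarith
    rw [hK_def]; linarith
  have h2sK : 2*s*K = s + 1/2 := by
    rw [hK_def]; field_simp
  set γ : ℝ := (1/2 - s)/2 with hγ_def
  have hγpos : 0 < γ := by rw [hγ_def]; linarith
  have hγ14 : γ ≤ 1/4 := by rw [hγ_def]; linarith
  set r₁ : ℝ := (2:ℝ) ^ (-γ) with hr₁_def
  have hr₁pos : 0 < r₁ := Real.rpow_pos_of_pos (by norm_num) _
  have hr₁lt : r₁ < 1 := Real.rpow_lt_one_of_one_lt_of_neg (by norm_num) (by linarith)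
  set r₂ : ℝ := K ^ (-θ) with hr₂_def
  have hr₂pos : 0 < r₂ := Real.rpow_pos_of_pos (by linarith) _
  have hr₂lt : r₂ < 1 := Real.rpow_lt_one_of_one_lt_of_neg hK1 (by linarith)
  -- conversion for natural exponents
  have hconv : ∀ n : ℕ, (2:ℝ) ^ (-(γ*(n:ℝ))) = r₁ ^ n := by
    intro n
    rw [hr₁_def, ← Real.rpow_natCast ((2:ℝ)^(-γ)) n, ← Real.rpow_mul (by norm_num)]
    ring_nf
  -- choice of the base scale A
  obtain ⟨n₀, hA8, hAK, hC3, hC4, hC5⟩ : ∃ n : ℕ, 8 ≤ (n:ℝ) ∧ 1 ≤ (n:ℝ)*(K-1) ∧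
      128 * (2:ℝ)^(-(γ*(n:ℝ))) * (1 - r₁)⁻¹ < 1 ∧
      (γ * Real.log 2)^(-θ) * (n:ℝ)^(-θ) * (1 - r₂)⁻¹ < 1/(M:ℝ) ∧
      (2:ℝ)^(-(γ*(n:ℝ))) < min ε 1 := by
    have ht1 : Tendsto (fun n:ℕ => r₁ ^ n) atTop (nhds 0) :=
      tendsto_pow_atTop_nhds_zero_of_lt_one hr₁pos.le hr₁lt
    have ht2 : Tendsto (fun n:ℕ => ((n:ℝ))^(-θ)) atTop (nhds 0) :=
      (tendsto_rpow_neg_atTop hθ).comp tendsto_natCast_atTop_atTop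
    have ev1 : ∀ᶠ n : ℕ in atTop, 8 ≤ (n:ℝ) :=
      tendsto_natCast_atTop_atTop.eventually_ge_atTop 8
    have ev2 : ∀ᶠ n : ℕ in atTop, 1 ≤ (n:ℝ)*(K-1) :=
      (tendsto_natCast_atTop_atTop.atTop_mul_const (by linarith : (0:ℝ) < K - 1)).eventually_ge_atTop 1
    have ev3 : ∀ᶠ n : ℕ in atTop, 128 * r₁^n * (1 - r₁)⁻¹ < 1 := by
      have h := ((ht1.const_mul (128:ℝ)).mul_const ((1 - r₁)⁻¹))
      simp only [mul_zero, zero_mul] at h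
      exact h.eventually_lt_const one_pos
    have ev4 : ∀ᶠ n : ℕ in atTop,
        (γ * Real.log 2)^(-θ) * (n:ℝ)^(-θ) * (1 - r₂)⁻¹ < 1/(M:ℝ) := by
      have h := ((ht2.const_mul ((γ * Real.log 2)^(-θ))).mul_const ((1 - r₂)⁻¹))
      simp only [mul_zero, zero_mul] at h
      exact h.eventually_lt_const (by positivity)
    have ev5 : ∀ᶠ n : ℕ in atTop, r₁^n < min ε 1 :=
      ht1.eventually_lt_const (lt_min hεpos one_pos)
    obtain ⟨n, ⟨⟨⟨⟨h1, h2⟩, h3⟩, h4⟩, h5⟩⟩ := (((((ev1.and ev2).and ev3).and ev4).and ev5).exists)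
    exact ⟨n, h1, h2, by rw [hconv]; exact h3, h4, by rw [hconv]; exact h5⟩
  set A : ℝ := (n₀ : ℝ) with hA_def
  have hA1 : 1 ≤ A := by linarith
  have hApos : 0 < A := by linarith
  -- the scales
  set a : ℕ → ℝ := fun i => A * K ^ i with ha_def
  have hapos : ∀ i, 0 < a i := fun i => mul_pos hApos (pow_pos (by linarith) i)
  have haA : ∀ i, A ≤ a i := by
    intro i
    rw [ha_def]
    calc A = A * 1 := (mul_one A).symm
      _ ≤ A * K ^ i := by
          apply mul_le_mul_of_nonneg_left _ hApos.le
          exact one_le_pow₀ hK1.le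
  have ha_lower : ∀ i, A + i ≤ a i := fun i => a_lower hA1 hK1 hAK i
  have ha_succ : ∀ i, a (i+1) = a i * K := by
    intro i; rw [ha_def]; simp [pow_succ]; ring
  set R : ℕ → ℝ := fun i => (2:ℝ) ^ (-(a i)) with hR_def
  set D : ℕ → ℝ := fun i => (2:ℝ) ^ (-(γ * a i)) with hD_def
  have hRpos : ∀ i, 0 < R i := fun i => Real.rpow_pos_of_pos (by norm_num) _
  have hDpos : ∀ i, 0 < D i := fun i => Real.rpow_pos_of_pos (by norm_num) _
  have hRD : ∀ i, 16 * R i ≤ D i := by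
    intro i
    have h16 : (16:ℝ) = (2:ℝ) ^ (4:ℝ) := by
      rw [show (4:ℝ) = ((4:ℕ):ℝ) by norm_num, Real.rpow_natCast]; norm_num
    rw [hR_def, hD_def, h16, ← Real.rpow_add (by norm_num)]
    apply Real.rpow_le_rpow_of_exponent_le (by norm_num)
    have h1 : A ≤ a i := haA i
    nlinarith [hapos i, hγ14, hγpos]
  have hDle0 : ∀ i, D i ≤ (2:ℝ)^(-(γ*A)) := by
    intro i
    rw [hD_def]
    apply Real.rpow_le_rpow_of_exponent_le (by norm_num)
    have := haA i
    nlinarith [hγpos]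
  have hDε : ∀ i, D i < min ε 1 := fun i => lt_of_le_of_lt (hDle0 i) hC5
  -- the cover
  obtain ⟨t, htcov, htdiam, htsum⟩ := exists_cover_of_hausdorff_zero hs_pos hμ0 (hRpos 0)
  have hdfin : ∀ n, EMetric.diam (t n) ≠ ⊤ :=
    fun n => ne_top_of_le_ne_top ENNReal.ofReal_ne_top (htdiam n)
  set dn : ℕ → ℝ := fun n => (EMetric.diam (t n)).toReal with hdn_def
  have hdn_nonneg : ∀ n, 0 ≤ dn n := fun n => ENNReal.toReal_nonneg
  have hdn_le : ∀ n, dn n ≤ R 0 := by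
    intro n
    rw [hdn_def]
    exact ENNReal.toReal_le_of_le_ofReal (hRpos 0).le (htdiam n)
  have hdiam_eq : ∀ n, EMetric.diam (t n) = ENNReal.ofReal (dn n) :=
    fun n => (ENNReal.ofReal_toReal (hdfin n)).symm
  set InBlock : ℕ → ℕ → Prop := fun i n => R (i+1) < dn n ∧ dn n ≤ R i with hIB_def
  -- every positive diameter lies in a block
  have hRle2 : ∀ i : ℕ, R i ≤ (2:ℝ)^(-(A + (i:ℝ))) := by
    intro i
    apply Real.rpow_le_rpow_of_exponent_le (by norm_num)
    have := ha_lower i; linarith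
  have hblock : ∀ n, 0 < dn n → ∃ i, InBlock i n := by
    intro n hdnpos
    have hex : ∃ i : ℕ, R (i+1) < dn n := by
      obtain ⟨m, hm⟩ := exists_pow_lt_of_lt_one hdnpos (by norm_num : (1:ℝ)/2 < 1)
      refine ⟨m, lt_of_le_of_lt ?_ hm⟩
      have e1 : (2:ℝ)^(-(((m+1:ℕ)):ℝ)) = ((1:ℝ)/2)^((m+1:ℕ)) := by
        rw [Real.rpow_neg (by norm_num), Real.rpow_natCast, one_div, inv_pow]
      calc R (m+1) ≤ (2:ℝ)^(-(A + ((m+1:ℕ):ℝ))) := hRle2 (m+1)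
        _ ≤ (2:ℝ)^(-(((m+1:ℕ)):ℝ)) := by
            apply Real.rpow_le_rpow_of_exponent_le (by norm_num)
            have : (0:ℝ) ≤ A := hApos.le
            linarith
        _ = ((1:ℝ)/2)^((m+1:ℕ)) := e1
        _ ≤ ((1:ℝ)/2)^m := by
            apply pow_le_pow_of_le_one (by norm_num) (by norm_num)
            omega
    refine ⟨Nat.find hex, Nat.find_spec hex, ?_⟩
    rcases Nat.eq_zero_or_pos (Nat.find hex) with h0 | hpos'
    · rw [h0]; exact hdn_le n
    · obtain ⟨k, hk⟩ : ∃ k, Nat.find hex = k + 1 := ⟨Nat.find hex - 1, by omega⟩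
      have hmin := Nat.find_min hex (m := k) (by omega)
      rw [hk]
      exact le_of_not_gt hmin
  -- counting sets per block
  have hcount : ∀ i, (∑' n, if InBlock i n then (1:ℝ≥0∞) else 0)
      ≤ ENNReal.ofReal ((R (i+1)) ^ (-s)) := by
    intro i
    have hstep : ∀ n, (if InBlock i n then (1:ℝ≥0∞) else 0)
        ≤ ENNReal.ofReal ((R (i+1)) ^ (-s)) * (EMetric.diam (t n)) ^ s := by
      intro n
      by_cases hb : InBlock i n
      · rw [if_pos hb, hdiam_eq n]
        have hdnpos : 0 < dn n := lt_trans (hRpos (i+1)) hb.1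
        rw [ENNReal.ofReal_rpow_of_pos hdnpos, ← ENNReal.ofReal_mul (by positivity)]
        have h1 : (1:ℝ) ≤ (R (i+1)) ^ (-s) * (dn n) ^ s := by
          have h2 : (R (i+1)) ^ s ≤ (dn n) ^ s :=
            Real.rpow_le_rpow (hRpos (i+1)).le hb.1.le hs_pos.le
          have h3 : (R (i+1)) ^ (-s) * (R (i+1)) ^ s = 1 := by
            rw [← Real.rpow_add (hRpos (i+1))]; norm_num
          calc (1:ℝ) = (R (i+1)) ^ (-s) * (R (i+1)) ^ s := h3.symm
            _ ≤ (R (i+1)) ^ (-s) * (dn n) ^ s := by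
                apply mul_le_mul_of_nonneg_left h2 (by positivity)
        calc (1:ℝ≥0∞) = ENNReal.ofReal 1 := by simp
          _ ≤ ENNReal.ofReal ((R (i+1)) ^ (-s) * (dn n) ^ s) := ENNReal.ofReal_le_ofReal h1
      · rw [if_neg hb]; exact zero_le
    calc (∑' n, if InBlock i n then (1:ℝ≥0∞) else 0)
        ≤ ∑' n, ENNReal.ofReal ((R (i+1)) ^ (-s)) * (EMetric.diam (t n)) ^ s :=
          ENNReal.tsum_le_tsum hstep
      _ = ENNReal.ofReal ((R (i+1)) ^ (-s)) * ∑' n, (EMetric.diam (t n)) ^ s :=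
          ENNReal.tsum_mul_left
      _ ≤ ENNReal.ofReal ((R (i+1)) ^ (-s)) * 1 := mul_le_mul_right htsum _
      _ = ENNReal.ofReal ((R (i+1)) ^ (-s)) := mul_one _
  -- the bad direction sets
  set BadP : ℕ → ℕ → ℕ → Set ℝ := fun i n m =>
    ⋃ (_ : InBlock i n) (_ : InBlock i m)
      (_ : ∃ x ∈ t n, ∃ y ∈ t m, D i / 2 ≤ dist x y), capture (t n) (t m) with hBadP_def
  set Bad : Set ℝ := ⋃ i, ⋃ n, ⋃ m, BadP i n m with hBad_def
  have hBadP_vol : ∀ i n m, volume (BadP i n m) ≤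
      (if InBlock i n then (1:ℝ≥0∞) else 0) * ((if InBlock i m then (1:ℝ≥0∞) else 0)
        * ENNReal.ofReal (128 * R i / D i)) := by
    intro i n m
    by_cases hn : InBlock i n
    · by_cases hm' : InBlock i m
      · by_cases hanch : ∃ x ∈ t n, ∃ y ∈ t m, D i / 2 ≤ dist x y
        · obtain ⟨x₀, hx₀, y₀, hy₀, hfar⟩ := hanch
          rw [if_pos hn, if_pos hm', one_mul, one_mul]
          have hsub : BadP i n m ⊆ capture (t n) (t m) := by
            simp only [hBadP_def]
            exact iUnion_subset fun _ => iUnion_subset fun _ => iUnion_subset fun _ => subset_rfl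
          refine le_trans (measure_mono hsub) ?_
          have hPd : ∀ x ∈ t n, ∀ x' ∈ t n, dist x x' ≤ R i := by
            intro x hx x' hx'
            have hb : Bornology.IsBounded (t n) := Metric.isBounded_iff_ediam_ne_top.2 (hdfin n)
            have hd : Metric.diam (t n) = dn n := rfl
            calc dist x x' ≤ Metric.diam (t n) := Metric.dist_le_diam_of_mem hb hx hx'
              _ ≤ R i := by rw [hd]; exact hn.2
          have hQd : ∀ y ∈ t m, ∀ y' ∈ t m, dist y y' ≤ R i := by
            intro y hy y' hy'
            have hb : Bornology.IsBounded (t m) := Metric.isBounded_iff_ediam_ne_top.2 (hdfin m)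
            have hd : Metric.diam (t m) = dn m := rfl
            calc dist y y' ≤ Metric.diam (t m) := Metric.dist_le_diam_of_mem hb hy hy'
              _ ≤ R i := by rw [hd]; exact hm'.2
          exact volume_capture_le (hRpos i).le (hDpos i) hPd hQd hx₀ hy₀ hfar (hRD i)
        · have hempty : BadP i n m = ∅ := by
            apply eq_empty_of_forall_notMem
            intro u hu
            simp only [hBadP_def, mem_iUnion] at hu
            exact hanch hu.2.2.1
          rw [hempty]; simp
      · have hempty : BadP i n m = ∅ := by
          apply eq_empty_of_forall_notMem
          intro u hu
          simp only [hBadP_def, mem_iUnion] at hu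
          exact hm' hu.2.1
        rw [hempty]; simp
    · have hempty : BadP i n m = ∅ := by
        apply eq_empty_of_forall_notMem
        intro u hu
        simp only [hBadP_def, mem_iUnion] at hu
        exact hn hu.1
      rw [hempty]; simp
  -- total volume of bad directions
  have hBadVol : volume Bad < 1 := by
    have h1 : volume Bad ≤ ∑' (i:ℕ), ∑' (n:ℕ), ∑' (m:ℕ), volume (BadP i n m) := by
      rw [hBad_def]
      calc volume (⋃ i, ⋃ n, ⋃ m, BadP i n m) ≤ ∑' (i:ℕ), volume (⋃ n, ⋃ m, BadP i n m) :=
            measure_iUnion_le _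
        _ ≤ ∑' (i:ℕ), ∑' (n:ℕ), volume (⋃ m, BadP i n m) :=
            ENNReal.tsum_le_tsum fun i => measure_iUnion_le _
        _ ≤ ∑' (i:ℕ), ∑' (n:ℕ), ∑' (m:ℕ), volume (BadP i n m) :=
            ENNReal.tsum_le_tsum fun i => ENNReal.tsum_le_tsum fun n => measure_iUnion_le _
    have h2 : ∀ i : ℕ, (∑' (n:ℕ), ∑' (m:ℕ), volume (BadP i n m))
        ≤ ENNReal.ofReal ((128 * (2:ℝ)^(-(γ*A))) * r₁^i) := by
      intro i
      have h4 : ∀ n, (∑' (m:ℕ), volume (BadP i n m)) ≤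
          (if InBlock i n then (1:ℝ≥0∞) else 0) *
            ((∑' (m:ℕ), if InBlock i m then (1:ℝ≥0∞) else 0) * ENNReal.ofReal (128 * R i / D i)) := by
        intro n
        calc (∑' (m:ℕ), volume (BadP i n m))
            ≤ ∑' (m:ℕ), (if InBlock i n then (1:ℝ≥0∞) else 0) *
                ((if InBlock i m then (1:ℝ≥0∞) else 0) * ENNReal.ofReal (128 * R i / D i)) :=
              ENNReal.tsum_le_tsum fun m => hBadP_vol i n m
          _ = (if InBlock i n then (1:ℝ≥0∞) else 0) *
              ∑' (m:ℕ), ((if InBlock i m then (1:ℝ≥0∞) else 0) * ENNReal.ofReal (128 * R i / D i)) :=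
              ENNReal.tsum_mul_left
          _ = (if InBlock i n then (1:ℝ≥0∞) else 0) *
              ((∑' (m:ℕ), if InBlock i m then (1:ℝ≥0∞) else 0) * ENNReal.ofReal (128 * R i / D i)) := by
              rw [ENNReal.tsum_mul_right]
      have h5 : (∑' (n:ℕ), ∑' (m:ℕ), volume (BadP i n m)) ≤
          (∑' (n:ℕ), if InBlock i n then (1:ℝ≥0∞) else 0) *
            ((∑' (m:ℕ), if InBlock i m then (1:ℝ≥0∞) else 0) * ENNReal.ofReal (128 * R i / D i)) := by
        calc (∑' (n:ℕ), ∑' (m:ℕ), volume (BadP i n m))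
            ≤ ∑' (n:ℕ), ((if InBlock i n then (1:ℝ≥0∞) else 0) *
              ((∑' (m:ℕ), if InBlock i m then (1:ℝ≥0∞) else 0) * ENNReal.ofReal (128 * R i / D i))) :=
              ENNReal.tsum_le_tsum h4
          _ = _ := ENNReal.tsum_mul_right
      refine le_trans h5 ?_
      have hkey : (R (i+1))^(-s) * ((R (i+1))^(-s) * (128 * R i / D i))
          = 128 * (2:ℝ)^(-(γ * a i)) := by
        have e := exp_calc (s := s) (γ := γ) (K := K) (a := a i) hγ_def h2sK
        have hR1 : R (i+1) = (2:ℝ)^(-(a i * K)) := by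
          simp only [hR_def]; rw [ha_succ i]
        have hRi : R i = (2:ℝ)^(-(a i)) := by simp only [hR_def]
        have hDi : D i = (2:ℝ)^(-(γ * a i)) := by simp only [hD_def]
        rw [hR1, hRi, hDi]
        calc ((2:ℝ)^(-(a i*K)))^(-s) * (((2:ℝ)^(-(a i*K)))^(-s)
              * (128 * (2:ℝ)^(-(a i)) / (2:ℝ)^(-(γ * a i))))
            = (((2:ℝ)^(-(a i*K)))^(-s))^2 * (128 * (2:ℝ)^(-(a i)) / (2:ℝ)^(-(γ * a i))) := by
              ring
          _ = 128 * (2:ℝ)^(-(γ * a i)) := e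
      have hbound : (∑' (n:ℕ), if InBlock i n then (1:ℝ≥0∞) else 0) *
            ((∑' (m:ℕ), if InBlock i m then (1:ℝ≥0∞) else 0) * ENNReal.ofReal (128 * R i / D i))
          ≤ ENNReal.ofReal ((R (i+1))^(-s) * ((R (i+1))^(-s) * (128 * R i / D i))) := by
        rw [ENNReal.ofReal_mul (by positivity), ENNReal.ofReal_mul (by positivity)]
        exact mul_le_mul' (hcount i) (mul_le_mul' (hcount i) le_rfl)
      refine le_trans hbound ?_
      rw [hkey]
      apply ENNReal.ofReal_le_ofReal
      have hrb := rpow_block_le hγpos hA1 hK1 hAK i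
      have e2 : (2:ℝ)^(-(γ * a i)) = (2:ℝ)^(-γ * (A * K ^ i)) := by
        rw [neg_mul, ha_def]
      have e3 : (2:ℝ)^(-(γ*A)) = (2:ℝ)^(-γ * A) := by rw [neg_mul]
      rw [e2, e3]
      calc 128 * ((2:ℝ)^(-γ * (A * K ^ i)))
          ≤ 128 * ((2:ℝ)^(-γ * A) * ((2:ℝ)^(-γ))^i) := by
            apply mul_le_mul_of_nonneg_left hrb (by norm_num)
        _ = 128 * (2:ℝ)^(-γ*A) * r₁^i := by rw [hr₁_def]; ring
    calc volume Bad ≤ ∑' (i:ℕ), ∑' (n:ℕ), ∑' (m:ℕ), volume (BadP i n m) := h1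
      _ ≤ ∑' (i:ℕ), ENNReal.ofReal ((128 * (2:ℝ)^(-(γ*A))) * r₁^i) :=
          ENNReal.tsum_le_tsum h2
      _ ≤ ENNReal.ofReal ((128 * (2:ℝ)^(-(γ*A))) * (1 - r₁)⁻¹) :=
          tsum_ofReal_geom_le _ _ (by positivity) hr₁pos.le hr₁lt
      _ < 1 := ENNReal.ofReal_lt_one.2 hC3
  -- a good direction exists
  obtain ⟨u, huT, huB⟩ : ∃ u, u ∈ T M ∧ u ∉ Bad := by
    by_contra hc
    push_neg at hc
    have hsub : T M ⊆ Bad := fun u hu => hc u hu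
    have h1 := le_trans hMvol (measure_mono hsub)
    exact absurd (lt_of_le_of_lt h1 hBadVol) (lt_irrefl _)
  have huIcc : u ∈ Icc (-1:ℝ) 1 := huT.1
  have huC : ((M:ℝ≥0∞))⁻¹ ≤ C (SS u) := huT.2
  -- decompose the slice
  set W : ℕ → Set X := fun i => SS u ∩ ⋃ (n : ℕ) (_ : InBlock i n), t n with hW_def
  set Z : Set X := SS u ∩ ⋃ (n : ℕ) (_ : dn n = 0), t n with hZ_def
  have hSsub : SS u ⊆ Z ∪ ⋃ i, W i := by
    intro x hx
    have hxE : x ∈ E := hx.2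
    obtain ⟨n, hn⟩ := mem_iUnion.1 (htcov hxE)
    rcases eq_or_lt_of_le (hdn_nonneg n) with h0 | hpos'
    · left
      exact ⟨hx, mem_iUnion.2 ⟨n, mem_iUnion.2 ⟨h0.symm, hn⟩⟩⟩
    · right
      obtain ⟨i, hi⟩ := hblock n hpos'
      exact mem_iUnion.2 ⟨i, hx, mem_iUnion.2 ⟨n, mem_iUnion.2 ⟨hi, hn⟩⟩⟩
  -- in a good direction every block part is confined
  have hconf : ∀ i, ∀ x ∈ W i, ∀ y ∈ W i, dist x y ≤ D i := by
    intro i x hx y hy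
    by_contra hlt
    push_neg at hlt
    obtain ⟨hxS, hxU⟩ := hx
    obtain ⟨hyS, hyU⟩ := hy
    obtain ⟨n, hn'⟩ := mem_iUnion.1 hxU
    obtain ⟨hbn, hxn⟩ := mem_iUnion.1 hn'
    obtain ⟨m, hm'⟩ := mem_iUnion.1 hyU
    obtain ⟨hbm, hym⟩ := mem_iUnion.1 hm'
    obtain ⟨τ, hτ⟩ := seg_sub (hxS.1) (hyS.1)
    have hτne : τ ≠ 0 := by
      intro h0
      rw [h0, zero_smul, sub_eq_zero] at hτ
      rw [hτ, dist_self] at hlt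
      exact absurd hlt (not_lt.2 (hDpos i).le)
    have hDhalf : D i / 2 ≤ dist x y := by
      have := hDpos i
      linarith [hlt.le]
    rcases lt_or_gt_of_ne hτne with hneg | hpos2
    · apply huB
      rw [hBad_def]
      refine mem_iUnion.2 ⟨i, mem_iUnion.2 ⟨m, mem_iUnion.2 ⟨n, ?_⟩⟩⟩
      simp only [hBadP_def]
      refine mem_iUnion.2 ⟨hbm, mem_iUnion.2 ⟨hbn,
        mem_iUnion.2 ⟨⟨y, hym, x, hxn, by rwa [dist_comm]⟩, ?_⟩⟩⟩
      refine ⟨huIcc, y, hym, x, hxn, -τ, by linarith, ?_⟩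
      rw [neg_smul, ← hτ]
      abel
    · apply huB
      rw [hBad_def]
      refine mem_iUnion.2 ⟨i, mem_iUnion.2 ⟨n, mem_iUnion.2 ⟨m, ?_⟩⟩⟩
      simp only [hBadP_def]
      refine mem_iUnion.2 ⟨hbn, mem_iUnion.2 ⟨hbm,
        mem_iUnion.2 ⟨⟨x, hxn, y, hym, hDhalf⟩, ?_⟩⟩⟩
      exact ⟨huIcc, x, hxn, y, hym, τ, hpos2, hτ⟩
  -- content bound per block
  have hWcont : ∀ i, C (W i) ≤ ENNReal.ofReal (𝔥 (D i)) := by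
    intro i
    have hWdiam : EMetric.diam (W i) ≤ ENNReal.ofReal (D i) := by
      apply EMetric.diam_le
      intro x hx y hy
      rw [edist_dist]
      exact ENNReal.ofReal_le_ofReal (hconf i x hx y hy)
    have hfin : EMetric.diam (W i) ≠ ⊤ := ne_top_of_le_ne_top ENNReal.ofReal_ne_top hWdiam
    refine le_trans (cont_le_gauge 𝔥 h𝔥0 _) ?_
    exact gauge_of_bounded 𝔥 h𝔥0 h𝔥nn hmono hfin
      (ENNReal.toReal_le_of_le_ofReal (hDpos i).le hWdiam)
  -- the degenerate part carries no content
  have hZzero : C Z = 0 := by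
    have hZsub : Z ⊆ ⋃ (n:ℕ), ⋃ (_ : dn n = 0), (t n ∩ SS u) := by
      intro x hx
      obtain ⟨hxS, hxU⟩ := hx
      obtain ⟨n, hn'⟩ := mem_iUnion.1 hxU
      obtain ⟨h0, hxn⟩ := mem_iUnion.1 hn'
      exact mem_iUnion.2 ⟨n, mem_iUnion.2 ⟨h0, hxn, hxS⟩⟩
    refine le_antisymm ?_ (zero_le)
    refine le_trans (measure_mono hZsub) ?_
    refine le_trans (measure_iUnion_le _) ?_
    have hzero : ∀ n:ℕ, C (⋃ (_ : dn n = 0), (t n ∩ SS u)) = 0 := by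
      intro n
      by_cases h0 : dn n = 0
      · have heq2 : (⋃ (_ : dn n = 0), (t n ∩ SS u)) = t n ∩ SS u := by
          simp only [h0, iUnion_true]
        rw [heq2]
        refine le_antisymm ?_ (zero_le)
        refine le_trans (cont_le_gauge 𝔥 h𝔥0 _) ?_
        have hd : EMetric.diam (t n ∩ SS u) ≤ EMetric.diam (t n) :=
          EMetric.diam_mono inter_subset_left
        have hd0 : EMetric.diam (t n ∩ SS u) = 0 := by
          rw [hdiam_eq n, h0] at hd
          simpa using hd
        have hfin2 : EMetric.diam (t n ∩ SS u) ≠ ⊤ := by rw [hd0]; simp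
        refine le_trans (gauge_of_bounded 𝔥 h𝔥0 h𝔥nn hmono hfin2 (D := 0) ?_) ?_
        · rw [hd0]; simp
        · simp [h𝔥0]
      · have heq2 : (⋃ (_ : dn n = 0), (t n ∩ SS u)) = ∅ := by
          simp only [h0, iUnion_false]
        rw [heq2]
        exact measure_empty
    have hsum0 : (∑' n, C (⋃ (_ : dn n = 0), (t n ∩ SS u))) = 0 := by
      rw [tsum_congr hzero]; simp
    exact le_of_eq hsum0
  -- geometric decay of the confined content
  have hHD : ∀ i, 𝔥 (D i) = ((γ * Real.log 2)^(-θ) * A^(-θ)) * r₂^i := by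
    intro i
    have hval : 𝔥 (D i) = Real.log (1/(D i)) ^ (-θ) :=
      hfm (D i) (hDpos i) (lt_of_lt_of_le (hDε i) (min_le_left _ _))
    have hinv : 1/(D i) = (2:ℝ)^(γ * a i) := by
      simp only [hD_def]
      rw [one_div, ← Real.rpow_neg (by norm_num : (0:ℝ) ≤ 2), neg_neg]
    have hlog : Real.log (1/(D i)) = (γ * a i) * Real.log 2 := by
      rw [hinv, Real.log_rpow (by norm_num)]
    rw [hval, hlog]
    have e1 : (γ * a i) * Real.log 2 = (γ * Real.log 2) * (A * K^i) := by
      simp only [ha_def]; ring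
    have hlog2pos : (0:ℝ) < Real.log 2 := Real.log_pos (by norm_num)
    rw [e1, Real.mul_rpow (by positivity) (by positivity)]
    have e15 : ((A * K^i))^(-θ) = A^(-θ) * ((K^i))^(-θ) :=
      Real.mul_rpow (by positivity) (by positivity)
    rw [e15]
    have e2 : ((K:ℝ)^(i:ℕ))^(-θ) = r₂^i := by
      rw [← Real.rpow_natCast K i, ← Real.rpow_mul (by linarith : (0:ℝ) ≤ K), hr₂_def,
        ← Real.rpow_natCast (K ^ (-θ)) i, ← Real.rpow_mul (by linarith : (0:ℝ) ≤ K)]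
      ring_nf
    rw [e2]; ring
  -- final contradiction
  have hfinal : C (SS u) < ((M:ℝ≥0∞))⁻¹ := by
    have hchain : C (SS u) ≤ ∑' i, ENNReal.ofReal (𝔥 (D i)) := by
      calc C (SS u) ≤ C (Z ∪ ⋃ i, W i) := measure_mono hSsub
        _ ≤ C Z + C (⋃ i, W i) := measure_union_le _ _
        _ = C (⋃ i, W i) := by rw [hZzero, zero_add]
        _ ≤ ∑' i, C (W i) := measure_iUnion_le _
        _ ≤ ∑' i, ENNReal.ofReal (𝔥 (D i)) := ENNReal.tsum_le_tsum hWcont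
    have hsum : (∑' i, ENNReal.ofReal (𝔥 (D i))) ≤
        ENNReal.ofReal (((γ * Real.log 2)^(-θ) * A^(-θ)) * (1 - r₂)⁻¹) := by
      have := tsum_ofReal_geom_le ((γ * Real.log 2)^(-θ) * A^(-θ)) r₂
        (by positivity) hr₂pos.le hr₂lt
      refine le_trans (le_of_eq (tsum_congr fun i => by rw [hHD i])) this
    refine lt_of_le_of_lt (le_trans hchain hsum) ?_
    have hlt2 : ((γ * Real.log 2)^(-θ) * A^(-θ)) * (1 - r₂)⁻¹ < 1/(M:ℝ) := by
      have h := hC4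
      calc ((γ * Real.log 2)^(-θ) * A^(-θ)) * (1 - r₂)⁻¹
          = (γ * Real.log 2)^(-θ) * A^(-θ) * (1 - r₂)⁻¹ := by ring
        _ < 1/(M:ℝ) := h
    calc ENNReal.ofReal (((γ * Real.log 2)^(-θ) * A^(-θ)) * (1 - r₂)⁻¹)
        < ENNReal.ofReal (1/(M:ℝ)) :=
          (ENNReal.ofReal_lt_ofReal_iff (by positivity)).2 hlt2
      _ = ((M:ℝ≥0∞))⁻¹ := by
          rw [one_div, ENNReal.ofReal_inv_of_pos hMpos, ENNReal.ofReal_natCast]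
  exact absurd (lt_of_le_of_lt huC hfinal) (lt_irrefl _)
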